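/- Let β ≥ 0, 0 < μ ≤ 1 and α < 0 with α + β^μ ≥ |α|. Then for every complex λ with Re(λ) > 0, |(λ+β)^μ + α| > α + β^μ. -/

import Mathlib

theorem stmt_6 (α β μ : ℝ) (hα : α < 0) (hβ : 0 ≤ β) (hμ0 : 0 < μ) (hμ1 : μ ≤ 1)
    (hαβ : α + β ^ μ ≥ |α|) (lam : ℂ) (hlam : 0 < lam.re) :
    ‖(lam + (β : ℂ)) ^ (μ : ℂ) + (α : ℂ)‖ > α + β ^ μ := by
  set w : ℂ := lam + (β : ℂ) with hw
  have hwre : 0 < w.re := by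
    simp only [hw, Complex.add_re, Complex.ofReal_re]
    linarith
  have hw0 : w ≠ 0 := by
    intro h
    rw [h] at hwre
    simp at hwre
  have habs : ‖w ^ (μ : ℂ)‖ = ‖w‖ ^ μ := by
    rw [Complex.norm_cpow_of_ne_zero hw0]
    simp
  have h1 : β < ‖w‖ := by
    calc β < w.re := by
            simp only [hw, Complex.add_re, Complex.ofReal_re]; linarith
      _ ≤ ‖w‖ := Complex.re_le_norm w
  have h2 : β ^ μ < ‖w‖ ^ μ := Real.rpow_lt_rpow hβ h1 hμ0
  have key : ‖w ^ (μ : ℂ)‖ - ‖(α : ℂ)‖ ≤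
      ‖w ^ (μ : ℂ) + (α : ℂ)‖ := by
    have h := norm_add_le (w ^ (μ : ℂ) + (α : ℂ)) (-(α : ℂ))
    simp only [add_neg_cancel_right, norm_neg] at h
    linarith
  have hαabs : ‖(α : ℂ)‖ = -α := by
    rw [Complex.norm_real, Real.norm_eq_abs, abs_of_neg hα]
  rw [habs, hαabs] at key
  linarith
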